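/- Let q' be a primitive l'-th root of unity and u, v commuting invertible elements of a commutative ring. Then ∏_{n=0}^{l'-1} (u - u^{-1} - q'^n v + q'^{-n} v^{-1}) = u^{l'} + (-u^{-1})^{l'} - v^{l'} - (-v^{-1})^{l'}. -/

import Mathlib

open Finset Polynomial


lemma scalar_prod {l' : ℕ} (hl' : 1 ≤ l') {q' : ℂ} (hq' : IsPrimitiveRoot q' l')
    (z : ℂ) : ∏ n ∈ Finset.range l', (z - q' ^ n) = z ^ l' - 1 := by
  have himg : Finset.image (q' ^ ·) (Finset.range l') = nthRootsFinset l' (1 : ℂ) := by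
    apply Finset.eq_of_subset_of_card_le
    · intro x hx
      simp only [Finset.mem_image, Finset.mem_range] at hx
      obtain ⟨n, hn, rfl⟩ := hx
      rw [Polynomial.mem_nthRootsFinset hl' (1 : ℂ)]
      rw [← pow_mul, mul_comm, pow_mul, hq'.pow_eq_one, one_pow]
    · rw [hq'.card_nthRootsFinset, Finset.card_image_of_injOn]
      · simp
      · exact fun a ha b hb h => hq'.injOn_pow ha hb h
  have := congrArg (Polynomial.eval z) (X_pow_sub_one_eq_prod hl' hq')
  simp only [eval_sub, eval_pow, eval_X, eval_one, eval_prod, eval_sub, eval_C] at this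
  rw [this, ← himg, Finset.prod_image]
  intro a ha b hb h
  exact hq'.injOn_pow (by simpa using ha) (by simpa using hb) h

lemma poly_prod {l' : ℕ} (hl' : 1 ≤ l') {q' : ℂ} (hq' : IsPrimitiveRoot q' l') :
    ∏ n ∈ Finset.range l', (X - C (q' ^ n)) = X ^ l' - 1 := by
  apply Polynomial.funext
  intro z
  have := scalar_prod hl' hq' z
  simpa [eval_prod] using this

lemma elem_prod {R : Type*} [CommRing R] [Algebra ℂ R] {l' : ℕ} (hl' : 1 ≤ l')
    {q' : ℂ} (hq' : IsPrimitiveRoot q' l') (x : R) :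
    ∏ n ∈ Finset.range l', (x - algebraMap ℂ R (q' ^ n)) = x ^ l' - 1 := by
  have := congrArg (Polynomial.aeval x) (poly_prod hl' hq')
  simpa using this

lemma unit_prod {R : Type*} [CommRing R] [Algebra ℂ R] {l' : ℕ} (hl' : 1 ≤ l')
    {q' : ℂ} (hq' : IsPrimitiveRoot q' l') (a : R) (b : Rˣ) :
    ∏ n ∈ Finset.range l', (a - algebraMap ℂ R (q' ^ n) * b) = a ^ l' - (b : R) ^ l' := by
  have h1 : ∀ n, a - algebraMap ℂ R (q' ^ n) * b
      = (b : R) * (a * (b⁻¹ : Rˣ) - algebraMap ℂ R (q' ^ n)) := by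
    intro n
    have : (b : R) * ((b⁻¹ : Rˣ) : R) = 1 := by
      rw [← Units.val_mul, mul_inv_cancel, Units.val_one]
    ring_nf
    linear_combination (-a) * this
  simp only [h1]
  rw [Finset.prod_mul_distrib, Finset.prod_const, Finset.card_range,
    elem_prod hl' hq']
  have hb : (b : R) * ((b⁻¹ : Rˣ) : R) = 1 := by
    rw [← Units.val_mul, mul_inv_cancel, Units.val_one]
  have hb' : (b : R) ^ l' * ((b⁻¹ : Rˣ) : R) ^ l' = 1 := by
    rw [← mul_pow, hb, one_pow]
  linear_combination a ^ l' * hb'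

/-- If `q'` is a primitive `l'`-th root of unity and `u, v` are invertible
elements of a commutative ℂ-algebra, then
`∏_{n=0}^{l'-1} (u - u⁻¹ - q'ⁿ v + q'⁻ⁿ v⁻¹)
  = u^{l'} + (-u⁻¹)^{l'} - v^{l'} - (-v⁻¹)^{l'}`. -/
theorem product_of_shifted_factors
    {R : Type*} [CommRing R] [Algebra ℂ R]
    (l' : ℕ) (hl' : 1 ≤ l') (q' : ℂ) (hq' : IsPrimitiveRoot q' l')
    (u v : Rˣ) :
    ∏ n ∈ Finset.range l',
        ((u : R) - ((u⁻¹ : Rˣ) : R) - (q' ^ n) • (v : R)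
          + ((q'⁻¹) ^ n) • ((v⁻¹ : Rˣ) : R))
      = ((u ^ l' : Rˣ) : R) + (-((u⁻¹ : Rˣ) : R)) ^ l'
        - ((v ^ l' : Rˣ) : R) - (-((v⁻¹ : Rˣ) : R)) ^ l' := by
  have hq0 : q' ≠ 0 := by
    intro h
    have := hq'.pow_eq_one
    rw [h, zero_pow (by omega)] at this
    exact zero_ne_one this
  -- factor each term
  have hfac : ∀ n, (u : R) - ((u⁻¹ : Rˣ) : R) - (q' ^ n) • (v : R)
          + ((q'⁻¹) ^ n) • ((v⁻¹ : Rˣ) : R)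
      = ((u : R) - algebraMap ℂ R (q' ^ n) * v)
        * (1 - algebraMap ℂ R ((q'⁻¹) ^ n) * ((-(u⁻¹ * v⁻¹) : Rˣ) : R)) := by
    intro n
    have hu : (u : R) * ((u⁻¹ : Rˣ) : R) = 1 := by
      rw [← Units.val_mul, mul_inv_cancel, Units.val_one]
    have hv : (v : R) * ((v⁻¹ : Rˣ) : R) = 1 := by
      rw [← Units.val_mul, mul_inv_cancel, Units.val_one]
    have hq : algebraMap ℂ R (q' ^ n) * algebraMap ℂ R ((q'⁻¹) ^ n) = 1 := by
      rw [← map_mul, ← mul_pow, mul_inv_cancel₀ hq0, one_pow, map_one]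
    rw [Algebra.smul_def, Algebra.smul_def, Units.val_neg, Units.val_mul]
    set A := algebraMap ℂ R (q' ^ n)
    set B := algebraMap ℂ R ((q'⁻¹) ^ n)
    linear_combination (-(B * ((v⁻¹:Rˣ):R))) * hu + ((u⁻¹:Rˣ):R) * hv
      + (((u⁻¹:Rˣ):R) * (v:R) * ((v⁻¹:Rˣ):R)) * hq
  simp only [hfac]
  rw [Finset.prod_mul_distrib, unit_prod hl' hq' ((u:R)) v,
    unit_prod hl' hq'.inv 1 (-(u⁻¹ * v⁻¹ : Rˣ))]
  have hu : (u : R) * ((u⁻¹ : Rˣ) : R) = 1 := by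
    rw [← Units.val_mul, mul_inv_cancel, Units.val_one]
  have hv : (v : R) * ((v⁻¹ : Rˣ) : R) = 1 := by
    rw [← Units.val_mul, mul_inv_cancel, Units.val_one]
  have hu' : (u : R) ^ l' * ((u⁻¹ : Rˣ) : R) ^ l' = 1 := by rw [← mul_pow, hu, one_pow]
  have hv' : (v : R) ^ l' * ((v⁻¹ : Rˣ) : R) ^ l' = 1 := by rw [← mul_pow, hv, one_pow]
  simp only [Units.val_pow_eq_pow_val, Units.val_neg, Units.val_mul, one_pow]
  linear_combination (-(-1:R)^l' * ((v⁻¹:Rˣ):R)^l') * hu' + ((-1:R)^l' * ((u⁻¹:Rˣ):R)^l') * hv'
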